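/- Let p, q ≥ 1 and let g = diag(1,…,1,−1,…,−1) (p entries +1 and q entries −1). Consider the real Lie algebra so(p,q) = { X ∈ M_{p+q}(ℝ) : Xᵀg + gX = 0 } with bracket the matrix commutator. For every pair of indices μ, ν with 1 ≤ μ ≤ p and p+1 ≤ ν ≤ p+q, the boost generator E(μ,ν) + E(ν,μ) is an essential element of so(p,q). -/

import Mathlib

open Matrix

attribute [local instance 100] LieRing.ofAssociativeRing

/-- The linear span of all brackets `⁅a, b⁆` with `a ∈ A`, `b ∈ B`. -/
def bracketSpan {L : Type*} [LieRing L] [LieAlgebra ℝ L] (A B : Submodule ℝ L) :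
    Submodule ℝ L :=
  Submodule.span ℝ {x | ∃ a ∈ A, ∃ b ∈ B, x = ⁅a, b⁆}

/-- `m` is essential: `ad m` is diagonalizable over `ℝ` and
`ℝ·m + [m,g] + [[m,g],[m,g]] = g`. -/
def Essential {L : Type*} [LieRing L] [LieAlgebra ℝ L] (m : L) : Prop :=
  (⨆ c : ℝ, (LieAlgebra.ad ℝ L m).eigenspace c) = ⊤ ∧
    Submodule.span ℝ {m} ⊔ LinearMap.range (LieAlgebra.ad ℝ L m) ⊔
      bracketSpan (LinearMap.range (LieAlgebra.ad ℝ L m))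
        (LinearMap.range (LieAlgebra.ad ℝ L m)) = ⊤

/-- The real Lie algebra of matrices `X` with `Xᵀ * J + J * X = 0`. -/
def lieSO {ι : Type*} [Fintype ι] [DecidableEq ι] (J : Matrix ι ι ℝ) :
    LieSubalgebra ℝ (Matrix ι ι ℝ) where
  carrier := {X | Xᵀ * J + J * X = 0}
  zero_mem' := by simp
  add_mem' := by
    intro a b ha hb
    simp only [Set.mem_setOf_eq] at ha hb ⊢
    rw [transpose_add, add_mul, mul_add, add_add_add_comm, ha, hb, add_zero]
  smul_mem' := by
    intro r X hX
    simp only [Set.mem_setOf_eq] at hX ⊢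
    rw [transpose_smul, smul_mul, Matrix.mul_smul, ← smul_add, hX, smul_zero]
  lie_mem' := by
    intro X Y hX hY
    simp only [Set.mem_setOf_eq] at hX hY ⊢
    have hX' : Xᵀ * J = -(J * X) := eq_neg_of_add_eq_zero_left hX
    have hY' : Yᵀ * J = -(J * Y) := eq_neg_of_add_eq_zero_left hY
    have h1 : Yᵀ * Xᵀ * J = J * (Y * X) := by
      rw [mul_assoc, hX', mul_neg, ← mul_assoc, hY', neg_mul, neg_neg, mul_assoc]
    have h2 : Xᵀ * Yᵀ * J = J * (X * Y) := by
      rw [mul_assoc, hY', mul_neg, ← mul_assoc, hX', neg_mul, neg_neg, mul_assoc]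
    rw [Ring.lie_def, transpose_sub, transpose_mul, transpose_mul, sub_mul, h1, h2,
      mul_sub]
    abel

/-- The symmetric "boost" matrix `E(a,b) + E(b,a)` lies in `lieSO (diagonal d)`
whenever `d a = 1` and `d b = -1`. -/
lemma boost_mem_lieSO {ι : Type*} [Fintype ι] [DecidableEq ι] (d : ι → ℝ) (a b : ι)
    (ha : d a = 1) (hb : d b = -1) :
    (Matrix.single a b (1 : ℝ) + Matrix.single b a 1) ∈ lieSO (diagonal d) := by
  have hab : a ≠ b := by intro h; rw [h, hb] at ha; norm_num at ha
  show _ᵀ * _ + _ * _ = 0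
  ext i j
  simp only [transpose_add, add_mul, mul_add, Matrix.add_apply, mul_diagonal,
    diagonal_mul, transpose_apply, Matrix.zero_apply, Matrix.single, of_apply]
  split_ifs <;> simp_all

section Aux
variable {ι : Type*} [Fintype ι] [DecidableEq ι]

lemma EmulY (a b : ι) (Y : Matrix ι ι ℝ) (i j : ι) :
    (Matrix.single a b (1:ℝ) * Y) i j = if i = a then Y b j else 0 := by
  simp [Matrix.mul_apply, Matrix.single, of_apply, ite_and, Finset.sum_ite_eq]
  split_ifs <;> simp_all

lemma YmulE (a b : ι) (Y : Matrix ι ι ℝ) (i j : ι) :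
    (Y * Matrix.single a b (1:ℝ)) i j = if j = b then Y i a else 0 := by
  simp [Matrix.mul_apply, Matrix.single, of_apply, ite_and]
  split_ifs <;> simp_all [eq_comm]

omit [Fintype ι] in
lemma Eapply (a b : ι) (i j : ι) :
    Matrix.single a b (1:ℝ) i j = if i = a ∧ j = b then 1 else 0 := by
  simp [Matrix.single, of_apply, and_comm, eq_comm]

omit [Fintype ι] in
lemma Eapply2 (a b i j : ι) :
    Matrix.single a b (1:ℝ) i j = (if i = a then (1:ℝ) else 0) * (if j = b then 1 else 0) := by
  simp [Matrix.single, of_apply, eq_comm, ite_and]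
  split_ifs <;> norm_num

lemma cubic_mat (μ ν : ι) (hμν : μ ≠ ν) (X : Matrix ι ι ℝ)
    (hs : X μ ν = X ν μ) (h1 : X μ μ = 0) (h2 : X ν ν = 0) :
    ⁅(Matrix.single μ ν (1:ℝ) + Matrix.single ν μ 1),
      ⁅(Matrix.single μ ν (1:ℝ) + Matrix.single ν μ 1),
        ⁅(Matrix.single μ ν (1:ℝ) + Matrix.single ν μ 1), X⁆⁆⁆ =
      ⁅(Matrix.single μ ν (1:ℝ) + Matrix.single ν μ 1), X⁆ := by
  ext i j
  simp only [Ring.lie_def, Matrix.sub_apply, Matrix.add_apply, mul_sub, sub_mul, mul_add,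
    add_mul, EmulY, YmulE]
  split_ifs <;> simp_all

section Y
variable (μ ν k : ι) (c : ℝ) (Y : Matrix ι ι ℝ)

lemma brW (hrμ : ∀ j, Y μ j = 0) (hcμ : ∀ i, Y i μ = 0) :
    ⁅Matrix.single μ k (1:ℝ) - c • Matrix.single k μ 1, Y⁆ =
      Matrix.single μ k (1:ℝ) * Y + c • (Y * Matrix.single k μ 1) := by
  ext i j
  simp only [Ring.lie_def, Matrix.sub_apply, Matrix.add_apply, Matrix.smul_apply,
    mul_sub, sub_mul, mul_add, add_mul, smul_mul_assoc, Matrix.mul_smul,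
    EmulY, YmulE, Eapply, smul_eq_mul]
  split_ifs <;> subst_vars <;> simp_all

lemma brM1 (hμν : μ ≠ ν)
    (hrμ : ∀ j, Y μ j = 0) (hrν : ∀ j, Y ν j = 0)
    (hcμ : ∀ i, Y i μ = 0) (hcν : ∀ i, Y i ν = 0) :
    ⁅Matrix.single μ ν (1:ℝ) + Matrix.single ν μ 1,
      Matrix.single μ k (1:ℝ) * Y + c • (Y * Matrix.single k μ 1)⁆ =
      Matrix.single ν k (1:ℝ) * Y - c • (Y * Matrix.single k ν 1) := by
  ext i j
  simp only [Ring.lie_def, Matrix.sub_apply, Matrix.add_apply, Matrix.smul_apply,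
    mul_sub, sub_mul, mul_add, add_mul, smul_mul_assoc, Matrix.mul_smul, mul_smul_comm,
    EmulY, YmulE, Eapply, smul_eq_mul]
  split_ifs <;> subst_vars <;> simp_all

lemma brM2 (hμν : μ ≠ ν)
    (hrμ : ∀ j, Y μ j = 0) (hrν : ∀ j, Y ν j = 0)
    (hcμ : ∀ i, Y i μ = 0) (hcν : ∀ i, Y i ν = 0) :
    ⁅Matrix.single μ ν (1:ℝ) + Matrix.single ν μ 1,
      Matrix.single ν k (1:ℝ) * Y - c • (Y * Matrix.single k ν 1)⁆ =
      Matrix.single μ k (1:ℝ) * Y + c • (Y * Matrix.single k μ 1) := by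
  ext i j
  simp only [Ring.lie_def, Matrix.sub_apply, Matrix.add_apply, Matrix.smul_apply,
    mul_sub, sub_mul, mul_add, add_mul, smul_mul_assoc, Matrix.mul_smul, mul_smul_comm,
    EmulY, YmulE, Eapply, smul_eq_mul]
  split_ifs <;> subst_vars <;> simp_all

lemma brC' (hrμ : ∀ j, Y μ j = 0) (hcμ : ∀ i, Y i μ = 0) (hdk : Y k k = 0) :
    ⁅Matrix.single μ k (1:ℝ) - c • Matrix.single k μ 1,
      Matrix.single μ k (1:ℝ) * Y + c • (Y * Matrix.single k μ 1)⁆ =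
      -c • (Matrix.single k k (1:ℝ) * Y + Y * Matrix.single k k 1) := by
  ext i j
  simp only [Ring.lie_def, Matrix.sub_apply, Matrix.add_apply, Matrix.smul_apply,
    Matrix.neg_apply, mul_sub, sub_mul, mul_add, add_mul, smul_mul_assoc, Matrix.mul_smul,
    mul_smul_comm, EmulY, YmulE, Eapply, smul_eq_mul, neg_smul]
  split_ifs <;> subst_vars <;> simp_all <;> ring

lemma brA' (hμν : μ ≠ ν) (hkμ : k ≠ μ) (hkν : k ≠ ν) :
    ⁅Matrix.single μ ν (1:ℝ) + Matrix.single ν μ 1,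
      Matrix.single ν k (1:ℝ) + c • Matrix.single k ν 1⁆ =
      Matrix.single μ k (1:ℝ) - c • Matrix.single k μ 1 := by
  have e1 : Matrix.single μ ν (1:ℝ) * Matrix.single ν k 1 = Matrix.single μ k 1 := by
    simpa using Matrix.single_mul_single_same (1:ℝ) μ ν k 1
  have e2 : Matrix.single ν k (1:ℝ) * Matrix.single μ ν 1 = 0 :=
    Matrix.single_mul_single_of_ne (1:ℝ) _ _ _ hkμ 1
  have e3 : Matrix.single ν μ (1:ℝ) * Matrix.single ν k 1 = 0 :=
    Matrix.single_mul_single_of_ne (1:ℝ) _ _ _ hμν 1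
  have e4 : Matrix.single ν k (1:ℝ) * Matrix.single ν μ 1 = 0 :=
    Matrix.single_mul_single_of_ne (1:ℝ) _ _ _ hkν 1
  have e5 : Matrix.single μ ν (1:ℝ) * Matrix.single k ν 1 = 0 :=
    Matrix.single_mul_single_of_ne (1:ℝ) _ _ _ hkν.symm 1
  have e6 : Matrix.single k ν (1:ℝ) * Matrix.single μ ν 1 = 0 :=
    Matrix.single_mul_single_of_ne (1:ℝ) _ _ _ hμν.symm 1
  have e7 : Matrix.single ν μ (1:ℝ) * Matrix.single k ν 1 = 0 :=
    Matrix.single_mul_single_of_ne (1:ℝ) _ _ _ hkμ.symm 1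
  have e8 : Matrix.single k ν (1:ℝ) * Matrix.single ν μ 1 = Matrix.single k μ 1 := by
    simpa using Matrix.single_mul_single_same (1:ℝ) k ν μ 1
  simp only [Ring.lie_def, mul_add, add_mul, smul_mul_assoc, mul_smul_comm,
    e1, e2, e3, e4, e5, e6, e7, e8, sub_zero, zero_sub, smul_neg, add_zero, zero_add,
    smul_zero, mul_one, zero_mul, mul_zero, neg_zero]

end Y

lemma sum_std : (∑ k : ι, Matrix.single k k (1:ℝ)) = 1 := by
  ext i j
  simp [Matrix.sum_apply, Matrix.single, of_apply, Matrix.one_apply, ite_and,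
    Finset.sum_ite_eq, eq_comm]

lemma sum_ekk (Y : Matrix ι ι ℝ) :
    (∑ k : ι, (Matrix.single k k (1:ℝ) * Y + Y * Matrix.single k k 1)) = Y + Y := by
  rw [Finset.sum_add_distrib, ← Finset.sum_mul, ← Finset.mul_sum, sum_std, one_mul, mul_one]

lemma bel_mem (d : ι → ℝ) (hd : ∀ i, d i = 1 ∨ d i = -1) (a b : ι) :
    (Matrix.single a b (1:ℝ) - (d a * d b) • Matrix.single b a 1) ∈ lieSO (diagonal d) := by
  have ha := hd a
  have hb := hd b
  show _ᵀ * _ + _ * _ = 0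
  ext i j
  simp only [transpose_sub, transpose_smul, sub_mul, mul_sub, Matrix.sub_apply,
    Matrix.add_apply, Matrix.smul_apply, mul_diagonal, diagonal_mul, transpose_apply,
    Matrix.zero_apply, Eapply2, smul_eq_mul]
  split_ifs <;> subst_vars <;> rcases ha with h1 | h1 <;> rcases hb with h2 | h2 <;>
    simp only [h1, h2] <;> first | ring | norm_num | linarith [h1, h2]

lemma so_entry (d : ι → ℝ) (X : Matrix ι ι ℝ)
    (hX : Xᵀ * diagonal d + diagonal d * X = 0) (i j : ι) :
    X j i * d j + d i * X i j = 0 := by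
  have := congrFun (congrFun hX i) j
  simpa [mul_diagonal, diagonal_mul] using this

end Aux

set_option maxHeartbeats 2000000 in
/-- In `so(p,q)` (with metric `g = diag(1,…,1,-1,…,-1)`, `p` entries `+1` and `q`
entries `-1`), each boost generator `E(μ,ν) + E(ν,μ)` with `μ` in the first `p` indices
and `ν` in the last `q` indices is essential. -/
theorem so_p_q_boost_essential (p q : ℕ) (hp : 1 ≤ p) (hq : 1 ≤ q)
    (μ ν : Fin (p + q)) (hμ : (μ : ℕ) < p) (hν : p ≤ (ν : ℕ)) :
    Essential
      (⟨Matrix.single μ ν (1 : ℝ) + Matrix.single ν μ 1,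
          boost_mem_lieSO (fun i : Fin (p + q) => if (i : ℕ) < p then (1 : ℝ) else -1) μ ν
            (by simp [hμ]) (by simp [Nat.not_lt.mpr hν])⟩ :
        lieSO (diagonal fun i : Fin (p + q) => if (i : ℕ) < p then (1 : ℝ) else -1)) := by
  set d : Fin (p + q) → ℝ := fun i => if (i : ℕ) < p then (1 : ℝ) else -1 with hd_def
  have hdμ : d μ = 1 := by simp [hd_def, hμ]
  have hdν : d ν = -1 := by simp [hd_def, Nat.not_lt.mpr hν]
  have hpm : ∀ i, d i = 1 ∨ d i = -1 := by
    intro i; simp only [hd_def]; split_ifs <;> simp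
  have hμν : μ ≠ ν := by
    intro h; rw [h] at hμ; omega
  set L := lieSO (diagonal d) with hL
  set Mmat : Matrix (Fin (p+q)) (Fin (p+q)) ℝ :=
    Matrix.single μ ν (1 : ℝ) + Matrix.single ν μ 1 with hMmat
  set m : L := ⟨Mmat, boost_mem_lieSO d μ ν hdμ hdν⟩ with hm
  show Essential m
  set f := LieAlgebra.ad ℝ L m with hf
  have hfval : ∀ x : L,
      ((f x : L) : Matrix (Fin (p+q)) (Fin (p+q)) ℝ) = ⁅Mmat, (x : Matrix (Fin (p+q)) (Fin (p+q)) ℝ)⁆ := by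
    intro x; rw [hf, LieAlgebra.ad_apply, LieSubalgebra.coe_bracket]
  have entry : ∀ (x : L) (i j : Fin (p+q)),
      (x : Matrix (Fin (p+q)) (Fin (p+q)) ℝ) j i * d j + d i * (x : Matrix (Fin (p+q)) (Fin (p+q)) ℝ) i j = 0 :=
    fun x => so_entry d x.1 x.2
  have hdiag : ∀ (x : L) (i : Fin (p+q)), (x : Matrix (Fin (p+q)) (Fin (p+q)) ℝ) i i = 0 := by
    intro x i
    have h := entry x i i
    rcases hpm i with hv | hv <;> rw [hv] at h <;> linarith
  have hsym : ∀ (x : L),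
      (x : Matrix (Fin (p+q)) (Fin (p+q)) ℝ) μ ν = (x : Matrix (Fin (p+q)) (Fin (p+q)) ℝ) ν μ := by
    intro x
    have h := entry x μ ν
    rw [hdμ, hdν] at h; linarith
  have hcube : ∀ w : L, f (f (f w)) = f w := by
    intro w
    apply Subtype.ext
    simp only [hfval]
    exact cubic_mat μ ν hμν _ (hsym w) (hdiag w μ) (hdiag w ν)
  have hMl : ∀ (Z : Matrix (Fin (p+q)) (Fin (p+q)) ℝ) i j,
      (Mmat * Z) i j = (if i = μ then Z ν j else 0) + (if i = ν then Z μ j else 0) := by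
    intro Z i j
    rw [hMmat, Matrix.add_mul, Matrix.add_apply, EmulY, EmulY]
  have hMr : ∀ (Z : Matrix (Fin (p+q)) (Fin (p+q)) ℝ) i j,
      (Z * Mmat) i j = (if j = ν then Z i μ else 0) + (if j = μ then Z i ν else 0) := by
    intro Z i j
    rw [hMmat, Matrix.mul_add, Matrix.add_apply, YmulE, YmulE]
  have hMkk : ∀ k, Mmat k k = 0 := by
    intro k
    rw [hMmat, Matrix.add_apply, Eapply, Eapply]
    have h1 : ¬(k = μ ∧ k = ν) := fun h => hμν (h.1.symm.trans h.2)
    have h2 : ¬(k = ν ∧ k = μ) := fun h => hμν (h.2.symm.trans h.1)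
    simp [h1, h2]
  have hMμν : Mmat μ ν = 1 := by
    rw [hMmat, Matrix.add_apply, Eapply, Eapply]
    simp [hμν, hμν.symm]
  have hMνμ : Mmat ν μ = 1 := by
    rw [hMmat, Matrix.add_apply, Eapply, Eapply]
    simp [hμν, hμν.symm]
  constructor
  · -- diagonalizability
    rw [eq_top_iff]
    intro x _
    set uu := f x with huu
    set vv := f uu with hvv
    have h3 : f vv = uu := hcube x
    have hx : x = (x - vv) + ((2⁻¹:ℝ) • (vv + uu) + (2⁻¹:ℝ) • (vv - uu)) := by module
    rw [hx]
    refine Submodule.add_mem _ ?_ (Submodule.add_mem _ ?_ ?_)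
    · refine le_iSup (fun c : ℝ => f.eigenspace c) 0 ?_
      rw [Module.End.mem_eigenspace_iff, map_sub, h3, ← huu, sub_self, zero_smul]
    · refine le_iSup (fun c : ℝ => f.eigenspace c) 1 ?_
      rw [Module.End.mem_eigenspace_iff, _root_.map_smul, map_add, h3, ← hvv]
      module
    · refine le_iSup (fun c : ℝ => f.eigenspace c) (-1) ?_
      rw [Module.End.mem_eigenspace_iff, _root_.map_smul, map_sub, h3, ← hvv]
      module
  · -- generation
    rw [eq_top_iff]
    intro x _
    set x0 := x - f (f x) with hx0
    have hfx0 : f x0 = 0 := by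
      rw [hx0, map_sub, hcube]; exact sub_self _
    set X0 := (x0 : Matrix (Fin (p+q)) (Fin (p+q)) ℝ) with hX0
    set cc := X0 μ ν with hcc
    set y : L := x0 - cc • m with hy
    have hYval : (y : Matrix (Fin (p+q)) (Fin (p+q)) ℝ) = X0 - cc • Mmat := rfl
    have hMX : ∀ i j, (Mmat * X0) i j = (X0 * Mmat) i j := by
      have h0 : (⁅Mmat, X0⁆ : Matrix (Fin (p+q)) (Fin (p+q)) ℝ) = 0 := by
        rw [← hfval x0]
        rw [hfx0]
        rfl
      have h1 : Mmat * X0 - X0 * Mmat = 0 := by rw [← Ring.lie_def]; exact h0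
      have h2 : Mmat * X0 = X0 * Mmat := sub_eq_zero.mp h1
      intro i j
      exact congrFun (congrFun h2 i) j
    have hssym : X0 μ ν = X0 ν μ := hsym x0
    have hX0d : ∀ k, X0 k k = 0 := hdiag x0
    -- row and column vanishing for Y
    have hrμ : ∀ j, (y : Matrix (Fin (p+q)) (Fin (p+q)) ℝ) μ j = 0 := by
      intro j
      rw [hYval, Matrix.sub_apply, Matrix.smul_apply, smul_eq_mul]
      by_cases hjν : j = ν
      · rw [hjν, hMμν, hcc]; ring
      · by_cases hjμ : j = μ
        · rw [hjμ, hMkk, hX0d]; ring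
        · have h := hMX ν j
          rw [hMl, hMr] at h
          simp [hμν, Ne.symm hμν, hjν, hjμ] at h
          have hMj : Mmat μ j = 0 := by
            rw [hMmat, Matrix.add_apply, Eapply, Eapply]
            simp [hjν, hμν]
          rw [hMj]; ring_nf; linarith [h]
    have hrν : ∀ j, (y : Matrix (Fin (p+q)) (Fin (p+q)) ℝ) ν j = 0 := by
      intro j
      rw [hYval, Matrix.sub_apply, Matrix.smul_apply, smul_eq_mul]
      by_cases hjμ : j = μ
      · rw [hjμ, hMνμ, hcc, hssym]; ring
      · by_cases hjν : j = ν
        · rw [hjν, hMkk, hX0d]; ring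
        · have h := hMX μ j
          rw [hMl, hMr] at h
          simp [hμν, Ne.symm hμν, hjν, hjμ] at h
          have hMj : Mmat ν j = 0 := by
            rw [hMmat, Matrix.add_apply, Eapply, Eapply]
            simp [hjμ, Ne.symm hμν]
          rw [hMj]; ring_nf; linarith [h]
    have hcμ : ∀ i, (y : Matrix (Fin (p+q)) (Fin (p+q)) ℝ) i μ = 0 := by
      intro i
      rw [hYval, Matrix.sub_apply, Matrix.smul_apply, smul_eq_mul]
      by_cases hiν : i = ν
      · rw [hiν, hMνμ, hcc, hssym]; ring
      · by_cases hiμ : i = μ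
        · rw [hiμ, hMkk, hX0d]; ring
        · have h := hMX i ν
          rw [hMl, hMr] at h
          simp [hμν, Ne.symm hμν, hiμ, hiν] at h
          have hMj : Mmat i μ = 0 := by
            rw [hMmat, Matrix.add_apply, Eapply, Eapply]
            simp [hiμ, hiν]
          rw [hMj]; ring_nf; linarith [h]
    have hcν : ∀ i, (y : Matrix (Fin (p+q)) (Fin (p+q)) ℝ) i ν = 0 := by
      intro i
      rw [hYval, Matrix.sub_apply, Matrix.smul_apply, smul_eq_mul]
      by_cases hiμ : i = μ
      · rw [hiμ, hMμν, hcc]; ring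
      · by_cases hiν : i = ν
        · rw [hiν, hMkk, hX0d]; ring
        · have h := hMX i μ
          rw [hMl, hMr] at h
          simp [hμν, Ne.symm hμν, hiμ, hiν] at h
          have hMj : Mmat i ν = 0 := by
            rw [hMmat, Matrix.add_apply, Eapply, Eapply]
            simp [hiμ, hiν]
          rw [hMj]; ring_nf; linarith [h]
    have hdg : ∀ k, (y : Matrix (Fin (p+q)) (Fin (p+q)) ℝ) k k = 0 := by
      intro k
      rw [hYval, Matrix.sub_apply, Matrix.smul_apply, smul_eq_mul, hMkk, hX0d]; ring
    -- the auxiliary elements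
    have hBmem : ∀ k, (Matrix.single μ k (1:ℝ) - d k • Matrix.single k μ 1) ∈
        lieSO (diagonal d) := by
      intro k
      have := bel_mem d hpm μ k
      rw [hdμ, one_mul] at this
      exact this
    set aB : Fin (p+q) → L := fun k => ⟨Matrix.single μ k (1:ℝ) - d k • Matrix.single k μ 1,
      hBmem k⟩ with haBdef
    have haBval : ∀ k, ((aB k : L) : Matrix (Fin (p+q)) (Fin (p+q)) ℝ) =
        Matrix.single μ k (1:ℝ) - d k • Matrix.single k μ 1 := fun k => rfl
    have haB : ∀ k, k ≠ ν → aB k ∈ LinearMap.range f := by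
      intro k hkν
      by_cases hkμ : k = μ
      · subst hkμ
        have hz : aB k = 0 := by
          apply Subtype.ext
          rw [haBval, hdμ, one_smul, sub_self]
          rfl
        rw [hz]
        exact Submodule.zero_mem _
      · have hmem : (Matrix.single ν k (1:ℝ) + d k • Matrix.single k ν 1) ∈
            lieSO (diagonal d) := by
          have := bel_mem d hpm ν k
          rw [hdν] at this
          have he : Matrix.single ν k (1:ℝ) - (-1 * d k) • Matrix.single k ν 1 =
              Matrix.single ν k (1:ℝ) + d k • Matrix.single k ν 1 := by
            rw [neg_one_mul, neg_smul, sub_neg_eq_add]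
          rw [he] at this
          exact this
        refine ⟨⟨Matrix.single ν k (1:ℝ) + d k • Matrix.single k ν 1, hmem⟩, ?_⟩
        apply Subtype.ext
        rw [hfval, haBval]
        exact brA' μ ν k (d k) hμν hkμ hkν
    have hbB : ∀ k, ⁅aB k, y⁆ ∈ LinearMap.range f := by
      intro k
      refine ⟨f ⁅aB k, y⁆, ?_⟩
      apply Subtype.ext
      simp only [hfval, LieSubalgebra.coe_bracket, haBval]
      rw [brW μ k (d k) _ hrμ hcμ, brM1 μ ν k (d k) _ hμν hrμ hrν hcμ hcν,
        brM2 μ ν k (d k) _ hμν hrμ hrν hcμ hcν, ← brW μ k (d k) _ hrμ hcμ]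
    -- the sum identity
    have hsum : (∑ k : Fin (p+q), (-(d k)/2) •
        ⁅(Matrix.single μ k (1:ℝ) - d k • Matrix.single k μ 1),
          ⁅(Matrix.single μ k (1:ℝ) - d k • Matrix.single k μ 1),
            (y : Matrix (Fin (p+q)) (Fin (p+q)) ℝ)⁆⁆) =
        (y : Matrix (Fin (p+q)) (Fin (p+q)) ℝ) := by
      have hstep : ∀ k : Fin (p+q), (-(d k)/2) •
          ⁅(Matrix.single μ k (1:ℝ) - d k • Matrix.single k μ 1),
            ⁅(Matrix.single μ k (1:ℝ) - d k • Matrix.single k μ 1),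
              (y : Matrix (Fin (p+q)) (Fin (p+q)) ℝ)⁆⁆ =
          (2⁻¹:ℝ) • (Matrix.single k k (1:ℝ) * (y : Matrix (Fin (p+q)) (Fin (p+q)) ℝ) +
            (y : Matrix (Fin (p+q)) (Fin (p+q)) ℝ) * Matrix.single k k 1) := by
        intro k
        rw [brW μ k (d k) _ hrμ hcμ, brC' μ k (d k) _ hrμ hcμ (hdg k), smul_smul]
        congr 1
        rcases hpm k with h | h <;> rw [h] <;> norm_num
      rw [Finset.sum_congr rfl (fun k _ => hstep k), ← Finset.smul_sum, sum_ekk,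
        ← two_smul ℝ, smul_smul]
      norm_num
    have hcoesmul : ∀ (c : ℝ) (a : L),
        ((c • a : L) : Matrix (Fin (p+q)) (Fin (p+q)) ℝ) =
          c • (a : Matrix (Fin (p+q)) (Fin (p+q)) ℝ) := fun _ _ => rfl
    have hysum : y = ∑ k : Fin (p+q), (-(d k)/2) • ⁅aB k, ⁅aB k, y⁆⁆ := by
      apply Subtype.ext
      rw [AddSubmonoidClass.coe_finset_sum]
      simp only [hcoesmul, LieSubalgebra.coe_bracket, haBval]
      exact hsum.symm
    -- f y = 0
    have hfm : f m = 0 := by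
      rw [hf, LieAlgebra.ad_apply, lie_self]
    have hfy : f y = 0 := by
      rw [hy, map_sub, _root_.map_smul, hfx0, hfm, smul_zero, sub_self]
    have hmy : ⁅m, y⁆ = 0 := by
      have := hfy
      rw [hf, LieAlgebra.ad_apply] at this
      exact this
    -- y is in the bracket span
    have hybr : y ∈ bracketSpan (LinearMap.range f) (LinearMap.range f) := by
      rw [hysum]
      refine Submodule.sum_mem _ (fun k _ => Submodule.smul_mem _ _ ?_)
      by_cases hkν : k = ν
      · have haBν : aB k = m := by
          apply Subtype.ext
          rw [haBval, hkν, hdν, neg_smul, one_smul, sub_neg_eq_add]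
        rw [haBν, hmy, lie_zero]
        exact Submodule.zero_mem _
      · exact Submodule.subset_span ⟨aB k, haB k hkν, ⁅aB k, y⁆, hbB k, rfl⟩
    -- assemble
    have hxd : x = cc • m + f (f x) + y := by
      rw [hy, hx0]; abel
    rw [hxd]
    refine Submodule.add_mem _ (Submodule.add_mem _ ?_ ?_) ?_
    · exact Submodule.mem_sup_left (Submodule.mem_sup_left
        (Submodule.smul_mem _ _ (Submodule.mem_span_singleton_self m)))
    · exact Submodule.mem_sup_left (Submodule.mem_sup_right ⟨f x, rfl⟩)
    · exact Submodule.mem_sup_right hybr
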